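/- Let β' ∈ (0, 1/4] and κ = 4/3 − β'/3 (so that κ − 1 = (1−β')/3 and κ ≥ 5/4). Let (B_ν)_{ν≥0} be a nondecreasing sequence of reals with B_ν ≥ 1 and ln B_ν ≤ A + Bν for some constants A, B ≥ 0. Then: (i) the infinite product Π := ∏_{μ=0}^∞ B_μ^{1/(3κ^{μ+1})} converges; (ii) for every δ₀ ∈ (0,1] and every 0 < ε₀ ≤ (δ₀/80)^{1/(1−β')} Π^{−1}, the sequence ε_ν := (ε₀ ∏_{μ=0}^{ν−1} B_μ^{1/(3κ^{μ+1})})^{κ^ν} satisfies ε_ν^{1−β'} B_ν ≤ (δ₀/80)^{κ^ν} ≤ δ₀/2^{ν+6} for every ν ≥ 0. -/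

import Mathlib

set_option maxHeartbeats 1000000 in
/-- bookkeeping of the KAM smallness constants: with
`κ = 4/3 − β'/3`, the product `Π = ∏ B_μ^{1/(3κ^{μ+1})}` converges, and if
`ε₀ ≤ (δ₀/80)^{1/(1−β')} Π⁻¹` then `ε_ν^{1−β'} B_ν ≤ (δ₀/80)^{κ^ν} ≤ δ₀/2^{ν+6}`. -/
theorem kam_smallness_bookkeeping (β' : ℝ) (hβ'0 : 0 < β') (hβ'1 : β' ≤ 1 / 4)
    (κ : ℝ) (hκ : κ = 4 / 3 - β' / 3)
    (B : ℕ → ℝ) (hB1 : ∀ ν, 1 ≤ B ν) (hBmono : Monotone B)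
    (A C : ℝ) (hA : 0 ≤ A) (hC : 0 ≤ C)
    (hBgrow : ∀ ν : ℕ, Real.log (B ν) ≤ A + C * ν) :
    Multipliable (fun μ : ℕ => B μ ^ (1 / (3 * κ ^ (μ + 1)))) ∧
    ∀ δ₀ : ℝ, 0 < δ₀ → δ₀ ≤ 1 →
      ∀ ε₀ : ℝ, 0 < ε₀ →
        ε₀ ≤ (δ₀ / 80) ^ (1 / (1 - β')) *
          (∏' μ : ℕ, B μ ^ (1 / (3 * κ ^ (μ + 1))))⁻¹ →
        ∀ ν : ℕ,
          ((ε₀ * ∏ μ ∈ Finset.range ν, B μ ^ (1 / (3 * κ ^ (μ + 1)))) ^ (κ ^ ν)) ^ (1 - β') *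
              B ν ≤ (δ₀ / 80) ^ (κ ^ ν) ∧
          (δ₀ / 80) ^ (κ ^ ν) ≤ δ₀ / 2 ^ (ν + 6) := by
  have hκ54 : (5 / 4 : ℝ) ≤ κ := by rw [hκ]; linarith
  have hκ1 : (1 : ℝ) < κ := by linarith
  have hκ0 : (0 : ℝ) < κ := by linarith
  have hβ'lt1 : β' < 1 := by linarith
  have h1β : 0 < 1 - β' := by linarith
  have hkey : 1 - β' = 3 * (κ - 1) := by rw [hκ]; ring
  -- the exponent sequence
  set a : ℕ → ℝ := fun μ => Real.log (B μ) * (1 / (3 * κ ^ (μ + 1))) with ha_def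
  have hκpow : ∀ μ : ℕ, (0 : ℝ) < κ ^ μ := fun μ => pow_pos hκ0 μ
  have hlogB0 : ∀ μ, 0 ≤ Real.log (B μ) := fun μ => Real.log_nonneg (hB1 μ)
  have ha0 : ∀ μ, 0 ≤ a μ := by
    intro μ
    exact mul_nonneg (hlogB0 μ) (by positivity)
  have hrpow_exp : ∀ μ : ℕ, B μ ^ (1 / (3 * κ ^ (μ + 1))) = Real.exp (a μ) := by
    intro μ
    rw [Real.rpow_def_of_pos (lt_of_lt_of_le one_pos (hB1 μ))]
  -- summability of `a`
  have hinvκ : (1 / κ : ℝ) < 1 := by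
    rw [div_lt_one hκ0]; exact hκ1
  have hinvκ0 : (0 : ℝ) ≤ 1 / κ := by positivity
  have hsummaj : Summable (fun μ : ℕ => (A + C * μ) * (1 / κ) ^ μ) := by
    have h1 : Summable (fun μ : ℕ => A * (1 / κ) ^ μ) :=
      (summable_geometric_of_lt_one hinvκ0 hinvκ).mul_left A
    have h2 : Summable (fun μ : ℕ => C * ((μ : ℝ) * (1 / κ) ^ μ)) := by
      have := summable_pow_mul_geometric_of_norm_lt_one (R := ℝ) 1
        (r := 1 / κ) (by rwa [Real.norm_eq_abs, abs_of_nonneg hinvκ0])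
      simpa [pow_one] using this.mul_left C
    have := h1.add h2
    refine this.congr fun μ => by ring
  have hsum : Summable a := by
    refine Summable.of_nonneg_of_le ha0 (fun μ => ?_) hsummaj
    have hb : (1 : ℝ) / (3 * κ ^ (μ + 1)) ≤ (1 / κ) ^ μ := by
      rw [div_pow, one_pow]
      apply div_le_div_of_nonneg_left one_pos.le (hκpow μ)
      calc κ ^ μ ≤ κ ^ (μ + 1) := by
            apply pow_le_pow_right₀ (le_of_lt hκ1) (Nat.le_succ μ)
        _ ≤ 3 * κ ^ (μ + 1) := by nlinarith [hκpow (μ + 1)]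
    calc a μ ≤ (A + C * μ) * (1 / (3 * κ ^ (μ + 1))) := by
          apply mul_le_mul_of_nonneg_right (hBgrow μ) (by positivity)
      _ ≤ (A + C * μ) * (1 / κ) ^ μ := by
          apply mul_le_mul_of_nonneg_left hb
          have : (0 : ℝ) ≤ (μ : ℝ) := Nat.cast_nonneg μ
          nlinarith
  have hfeq : (fun μ : ℕ => B μ ^ (1 / (3 * κ ^ (μ + 1)))) = Real.exp ∘ a :=
    funext fun μ => hrpow_exp μ
  have hprod : HasProd (fun μ : ℕ => B μ ^ (1 / (3 * κ ^ (μ + 1)))) (Real.exp (∑' μ, a μ)) :=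
    hfeq ▸ hsum.hasSum.rexp
  refine ⟨hprod.multipliable, ?_⟩
  intro δ₀ hδ0 hδ1 ε₀ hε0 hε ν
  have hPi : (∏' μ : ℕ, B μ ^ (1 / (3 * κ ^ (μ + 1)))) = Real.exp (∑' μ, a μ) :=
    hprod.tprod_eq
  set S : ℝ := ∑' μ, a μ with hS
  set Sν : ℝ := ∑ μ ∈ Finset.range ν, a μ with hSν
  have hPν : (∏ μ ∈ Finset.range ν, B μ ^ (1 / (3 * κ ^ (μ + 1)))) = Real.exp Sν := by
    rw [hSν, Real.exp_sum]
    exact Finset.prod_congr rfl fun μ _ => hrpow_exp μ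
  -- tail sum
  have htail_eq : Sν + (∑' j : ℕ, a (j + ν)) = S := Summable.sum_add_tsum_nat_add ν hsum
  have hgeo : Summable (fun j : ℕ => (1 / κ : ℝ) ^ j) :=
    summable_geometric_of_lt_one hinvκ0 hinvκ
  have htail_ge : Real.log (B ν) * (1 / (3 * κ ^ (ν + 1))) * (1 - 1 / κ)⁻¹
      ≤ ∑' j : ℕ, a (j + ν) := by
    have hsum_tail : Summable (fun j : ℕ => a (j + ν)) := by
      exact (summable_nat_add_iff ν).mpr hsum
    have hle : ∀ j : ℕ, Real.log (B ν) * (1 / (3 * κ ^ (ν + 1))) * (1 / κ) ^ j ≤ a (j + ν) := by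
      intro j
      have hBle : Real.log (B ν) ≤ Real.log (B (j + ν)) := by
        apply Real.log_le_log (lt_of_lt_of_le one_pos (hB1 ν))
        exact hBmono (Nat.le_add_left ν j)
      have hpow_eq : κ ^ (j + ν + 1) = κ ^ (ν + 1) * κ ^ j := by ring
      have hfrac : (1 : ℝ) / (3 * κ ^ (ν + 1)) * (1 / κ) ^ j = 1 / (3 * κ ^ (j + ν + 1)) := by
        rw [hpow_eq, div_pow, one_pow]
        field_simp
      calc Real.log (B ν) * (1 / (3 * κ ^ (ν + 1))) * (1 / κ) ^ j
          = Real.log (B ν) * (1 / (3 * κ ^ (j + ν + 1))) := by rw [mul_assoc, hfrac]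
        _ ≤ Real.log (B (j + ν)) * (1 / (3 * κ ^ (j + ν + 1))) := by
            apply mul_le_mul_of_nonneg_right hBle (by positivity)
        _ = a (j + ν) := rfl
    calc Real.log (B ν) * (1 / (3 * κ ^ (ν + 1))) * (1 - 1 / κ)⁻¹
        = ∑' j : ℕ, Real.log (B ν) * (1 / (3 * κ ^ (ν + 1))) * (1 / κ) ^ j := by
          rw [tsum_mul_left, tsum_geometric_of_lt_one hinvκ0 hinvκ]
      _ ≤ ∑' j : ℕ, a (j + ν) := by
          refine Summable.tsum_le_tsum hle ((hgeo.mul_left _)) hsum_tail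
  -- key tail value
  have hκν : (0 : ℝ) < κ ^ ν := hκpow ν
  have htail_key : Real.log (B ν) / ((1 - β') * κ ^ ν) ≤ ∑' j : ℕ, a (j + ν) := by
    refine le_trans (le_of_eq ?_) htail_ge
    have hκne : κ ≠ 0 := ne_of_gt hκ0
    have h1 : (1 : ℝ) - 1 / κ = (κ - 1) / κ := by field_simp
    rw [h1, hkey]
    have hκ1ne : κ - 1 ≠ 0 := by intro h; linarith
    field_simp
    ring
  -- positivity facts
  have hδ80 : (0 : ℝ) < δ₀ / 80 := by positivity
  have hPνpos : (0 : ℝ) < ∏ μ ∈ Finset.range ν, B μ ^ (1 / (3 * κ ^ (μ + 1))) := by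
    rw [hPν]; exact Real.exp_pos _
  have hxpos : (0 : ℝ) < ε₀ * ∏ μ ∈ Finset.range ν, B μ ^ (1 / (3 * κ ^ (μ + 1))) :=
    mul_pos hε0 hPνpos
  set x : ℝ := ε₀ * ∏ μ ∈ Finset.range ν, B μ ^ (1 / (3 * κ ^ (μ + 1))) with hx
  -- log of hypothesis
  have hlogε : Real.log ε₀ ≤ Real.log (δ₀ / 80) / (1 - β') - S := by
    have h1 : Real.log ε₀ ≤ Real.log ((δ₀ / 80) ^ (1 / (1 - β')) *
        (∏' μ : ℕ, B μ ^ (1 / (3 * κ ^ (μ + 1))))⁻¹) := by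
      apply Real.log_le_log hε0 hε
    rw [hPi, Real.log_mul (ne_of_gt (Real.rpow_pos_of_pos hδ80 _))
      (ne_of_gt (inv_pos.mpr (Real.exp_pos _))), Real.log_rpow hδ80,
      Real.log_inv, Real.log_exp] at h1
    calc Real.log ε₀ ≤ 1 / (1 - β') * Real.log (δ₀ / 80) - S := h1
      _ = Real.log (δ₀ / 80) / (1 - β') - S := by ring
  have hlogx : Real.log x ≤ Real.log (δ₀ / 80) / (1 - β') - ∑' j : ℕ, a (j + ν) := by
    rw [hx, Real.log_mul (ne_of_gt hε0) (ne_of_gt hPνpos), hPν, Real.log_exp]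
    have : Sν = S - ∑' j : ℕ, a (j + ν) := by linarith [htail_eq]
    rw [this]
    linarith [hlogε]
  -- main log inequality
  have hmain_log : (1 - β') * (κ ^ ν * Real.log x) + Real.log (B ν)
      ≤ κ ^ ν * Real.log (δ₀ / 80) := by
    have h1 : (1 - β') * κ ^ ν * Real.log x ≤ (1 - β') * κ ^ ν *
        (Real.log (δ₀ / 80) / (1 - β') - ∑' j : ℕ, a (j + ν)) := by
      apply mul_le_mul_of_nonneg_left hlogx (by positivity)
    have h2 : (1 - β') * κ ^ ν * (Real.log (B ν) / ((1 - β') * κ ^ ν))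
        ≤ (1 - β') * κ ^ ν * (∑' j : ℕ, a (j + ν)) := by
      apply mul_le_mul_of_nonneg_left htail_key (by positivity)
    have h3 : (1 - β') * κ ^ ν * (Real.log (B ν) / ((1 - β') * κ ^ ν)) = Real.log (B ν) := by
      field_simp
    have h4 : (1 - β') * κ ^ ν * (Real.log (δ₀ / 80) / (1 - β')) = κ ^ ν * Real.log (δ₀ / 80) := by
      field_simp
    nlinarith [h1, h2]
  -- first inequality
  have hfirst : ((x) ^ (κ ^ ν)) ^ (1 - β') * B ν ≤ (δ₀ / 80) ^ (κ ^ ν) := by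
    have hLpos : (0 : ℝ) < ((x) ^ (κ ^ ν)) ^ (1 - β') * B ν := by
      apply mul_pos (Real.rpow_pos_of_pos (Real.rpow_pos_of_pos hxpos _) _)
      exact lt_of_lt_of_le one_pos (hB1 ν)
    have hRpos : (0 : ℝ) < (δ₀ / 80) ^ (κ ^ ν) := Real.rpow_pos_of_pos hδ80 _
    rw [← Real.log_le_log_iff hLpos hRpos,
      Real.log_mul (ne_of_gt (Real.rpow_pos_of_pos (Real.rpow_pos_of_pos hxpos _) _))
        (ne_of_gt (lt_of_lt_of_le one_pos (hB1 ν))),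
      Real.log_rpow (Real.rpow_pos_of_pos hxpos _), Real.log_rpow hxpos,
      Real.log_rpow hδ80]
    linarith [hmain_log]
  -- second inequality
  have hsecond : (δ₀ / 80) ^ (κ ^ ν) ≤ δ₀ / 2 ^ (ν + 6) := by
    have h80 : (0 : ℝ) < 80 := by norm_num
    have hκν1 : (1 : ℝ) ≤ κ ^ ν := one_le_pow₀ hκ1.le
    rw [Real.div_rpow hδ0.le h80.le]
    have hnum : δ₀ ^ (κ ^ ν) ≤ δ₀ := by
      calc δ₀ ^ (κ ^ ν) ≤ δ₀ ^ (1 : ℝ) :=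
            Real.rpow_le_rpow_of_exponent_ge hδ0 hδ1 hκν1
        _ = δ₀ := Real.rpow_one δ₀
    have hden : (2 : ℝ) ^ (ν + 6) ≤ (80 : ℝ) ^ (κ ^ ν) := by
      have h54 : (1 : ℝ) + (ν : ℝ) * (1 / 4) ≤ (5 / 4 : ℝ) ^ ν := by
        have := one_add_mul_le_pow (a := (1 / 4 : ℝ)) (by norm_num) ν
        calc (1 : ℝ) + (ν : ℝ) * (1 / 4) = 1 + (ν : ℝ) * (1 / 4) := rfl
          _ ≤ (1 + 1 / 4 : ℝ) ^ ν := this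
          _ = (5 / 4 : ℝ) ^ ν := by norm_num
      have hκν54 : (5 / 4 : ℝ) ^ ν ≤ κ ^ ν := pow_le_pow_left₀ (by norm_num) hκ54 ν
      have hν0 : (0 : ℝ) ≤ (ν : ℝ) := Nat.cast_nonneg ν
      have hexp6 : ((ν : ℝ) + 6) ≤ 6 * κ ^ ν := by linarith
      have h1 : (2 : ℝ) ^ (ν + 6) = (2 : ℝ) ^ (((ν + 6 : ℕ) : ℝ)) :=
        (Real.rpow_natCast 2 (ν + 6)).symm
      have h2 : (2 : ℝ) ^ (((ν + 6 : ℕ) : ℝ)) ≤ (2 : ℝ) ^ (6 * κ ^ ν) := by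
        apply Real.rpow_le_rpow_of_exponent_le one_le_two
        push_cast
        linarith [hexp6]
      have h3 : (2 : ℝ) ^ (6 * κ ^ ν) = (64 : ℝ) ^ (κ ^ ν) := by
        rw [show (6 : ℝ) * κ ^ ν = ((6 : ℕ) : ℝ) * κ ^ ν by norm_num,
          Real.rpow_mul (by norm_num : (0 : ℝ) ≤ 2), Real.rpow_natCast]
        norm_num
      have h4 : (64 : ℝ) ^ (κ ^ ν) ≤ (80 : ℝ) ^ (κ ^ ν) :=
        Real.rpow_le_rpow (by norm_num) (by norm_num) (by positivity)
      rw [h1]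
      calc (2 : ℝ) ^ (((ν + 6 : ℕ) : ℝ)) ≤ (2 : ℝ) ^ (6 * κ ^ ν) := h2
        _ = (64 : ℝ) ^ (κ ^ ν) := h3
        _ ≤ (80 : ℝ) ^ (κ ^ ν) := h4
    exact div_le_div₀ hδ0.le hnum (by positivity) hden
  exact ⟨hfirst, hsecond⟩
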